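/- Theorem 3.7 (quenched linear response): lim_{ε→0} sup_{ω∈Ω'} ‖ (1/ε)(h_ω^ε − h_ω) − ĥ_ω ‖_w = 0, i.e. the map ε ↦ (h_ω^ε)_{ω∈Ω'} is differentiable at ε = 0 in L^∞(Ω', B_w), with derivative (ĥ_ω)_{ω∈Ω'}. -/

import Mathlib

open MeasureTheory Filter Topology

noncomputable section

/-- The cocycle of operators:
`iterOp σ L ε n ω = L (σ^[n-1] ω) ε ∘ ⋯ ∘ L (σ ω) ε ∘ L ω ε`. -/
def iterOp {Ω B : Type*} [NormedAddCommGroup B] [NormedSpace ℝ B]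
    (σ : Ω → Ω) (L : Ω → ℝ → (B →L[ℝ] B)) (ε : ℝ) : ℕ → Ω → (B →L[ℝ] B)
  | 0, _ => ContinuousLinearMap.id ℝ B
  | n + 1, ω => iterOp σ L ε n (σ ω) ∘L L ω ε

lemma iterOp_zero {Ω B : Type*} [NormedAddCommGroup B] [NormedSpace ℝ B]
    (σ : Ω → Ω) (L : Ω → ℝ → (B →L[ℝ] B)) (ε : ℝ) (ω : Ω) (h : B) :
    iterOp σ L ε 0 ω h = h := rfl

lemma iterOp_succ {Ω B : Type*} [NormedAddCommGroup B] [NormedSpace ℝ B]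
    (σ : Ω → Ω) (L : Ω → ℝ → (B →L[ℝ] B)) (ε : ℝ) (n : ℕ) (ω : Ω) (h : B) :
    iterOp σ L ε (n + 1) ω h = iterOp σ L ε n (σ ω) (L ω ε h) := rfl

lemma iterOp_compat {Ω B B' : Type*} [NormedAddCommGroup B] [NormedSpace ℝ B]
    [NormedAddCommGroup B'] [NormedSpace ℝ B']
    (σ : Ω → Ω) (L : Ω → ℝ → (B →L[ℝ] B)) (L' : Ω → ℝ → (B' →L[ℝ] B'))
    (J : B →ₗ[ℝ] B') (hJ : ∀ ω ε h, J (L ω ε h) = L' ω ε (J h)) (ε : ℝ) :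
    ∀ (n : ℕ) (ω : Ω) (h : B), J (iterOp σ L ε n ω h) = iterOp σ L' ε n ω (J h) := by
  intro n
  induction n with
  | zero => intro ω h; rfl
  | succ n ih =>
    intro ω h
    rw [iterOp_succ, iterOp_succ, ih, hJ]

lemma tele {B : Type*} [AddCommGroup B] (A F : ℕ → B)
    (h : ∀ n, A n = A (n + 1) + F n) :
    ∀ n, A 0 = A n + ∑ j ∈ Finset.range n, F j := by
  intro n
  induction n with
  | zero => simp
  | succ n ih => rw [Finset.sum_range_succ, ih, h n]; abel

lemma geom_bound {r : ℝ} (h0 : 0 ≤ r) (h1 : r < 1) (n : ℕ) :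
    ∑ j ∈ Finset.range n, r ^ j ≤ (1 - r)⁻¹ := by
  have hr : 0 < 1 - r := by linarith
  rw [geom_sum_eq (ne_of_lt h1), div_le_iff_of_neg (by linarith : r - 1 < 0)]
  have h2 : 0 ≤ r ^ n := pow_nonneg h0 n
  have h3 : (1 - r)⁻¹ * (1 - r) = 1 := inv_mul_cancel₀ (ne_of_gt hr)
  nlinarith [inv_nonneg.mpr hr.le]

set_option maxHeartbeats 2000000 in
theorem stmt_14
    {Ω : Type*} [MeasurableSpace Ω] (P : Measure Ω) [IsProbabilityMeasure P]
    (σ σinv : Ω → Ω)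
    (hσinv₁ : Function.LeftInverse σinv σ) (hσinv₂ : Function.RightInverse σinv σ)
    (hσinvmeas : Measurable σinv)
    (hσerg : Ergodic σ P)
    {Bs Bw : Type*}
    [NormedAddCommGroup Bs] [NormedSpace ℝ Bs] [CompleteSpace Bs]
    [NormedAddCommGroup Bw] [NormedSpace ℝ Bw] [CompleteSpace Bw]
    [MeasurableSpace Bs] [BorelSpace Bs]
    (ιw : Bs →ₗ[ℝ] Bw) (hιw_inj : Function.Injective ιw)
    (hιw_norm : ∀ h : Bs, ‖ιw h‖ ≤ ‖h‖)
    (ψ : Bw →L[ℝ] ℝ) (hψ_ne : ∃ g : Bs, ψ (ιw g) ≠ 0)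
    (I : Set ℝ) (hI : I ∈ nhds (0 : ℝ))
    (L : Ω → ℝ → (Bs →L[ℝ] Bs)) (Lw : Ω → ℝ → (Bw →L[ℝ] Bw))
    (hcompat : ∀ (ω : Ω) (ε : ℝ) (h : Bs), ιw (L ω ε h) = Lw ω ε (ιw h))
    (hmeas : ∀ ε ∈ I, ∀ h : Bs, Measurable fun ω => L ω ε h)
    (D lam C lam1 : ℝ) (hD : 0 < D) (hlam : 0 < lam) (hC : 0 < C)
    (hlam1 : lam1 ∈ Set.Ioo (0 : ℝ) 1)
    (Ω' : Set Ω) (hΩ'meas : MeasurableSet Ω') (hΩ'full : P Ω' = 1)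
    (hΩ'inv : ∀ ω, ω ∈ Ω' ↔ σ ω ∈ Ω')
    (hdec : ∀ ω ∈ Ω', ∀ n : ℕ, ∀ h : Bs, ψ (ιw h) = 0 →
      ‖iterOp σ L 0 n ω h‖ ≤ D * Real.exp (-lam * n) * ‖h‖)
    (h1 : ∀ ε ∈ I, ∀ ω ∈ Ω', ∀ n : ℕ, ∀ h : Bs,
      ‖iterOp σ L ε n ω h‖ ≤ C * lam1 ^ n * ‖h‖ + C * ‖ιw h‖)
    (h2 : ∀ ε ∈ I, ∀ ω ∈ Ω', ∀ h : Bs,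
      ‖ιw (L ω ε h) - ιw (L ω 0 h)‖ ≤ C * |ε| * ‖h‖)
    (h3 : ∀ ε ∈ I, ∀ ω ∈ Ω', ∀ n : ℕ, ‖iterOp σ Lw ε n ω‖ ≤ C)
    (h4 : ∀ ε ∈ I, ∀ ω ∈ Ω', ∀ h : Bs, ψ (ιw (L ω ε h)) = ψ (ιw h))
    {Bss : Type*} [NormedAddCommGroup Bss] [NormedSpace ℝ Bss] [CompleteSpace Bss]
    [MeasurableSpace Bss] [BorelSpace Bss]
    (ιs : Bss →ₗ[ℝ] Bs) (hιs_inj : Function.Injective ιs)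
    (hιs_norm : ∀ h : Bss, ‖ιs h‖ ≤ ‖h‖)
    (Lss : Ω → ℝ → (Bss →L[ℝ] Bss))
    (hcompat_ss : ∀ (ω : Ω) (ε : ℝ) (h : Bss), ιs (Lss ω ε h) = L ω ε (ιs h))
    (hmeas_ss : ∀ ε ∈ I, ∀ h : Bss, Measurable fun ω => Lss ω ε h)
    (h1011 : ∀ ω ∈ Ω', ∀ n : ℕ, ∀ h : Bss, ψ (ιw (ιs h)) = 0 →
      ‖iterOp σ Lss 0 n ω h‖ ≤ D * Real.exp (-lam * n) * ‖h‖)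
    (h1x : ∀ ε ∈ I, ∀ ω ∈ Ω', ∀ n : ℕ, ∀ h : Bss,
      ‖iterOp σ Lss ε n ω h‖ ≤ C * lam1 ^ n * ‖h‖ + C * ‖ιs h‖)
    (h2x : ∀ ε ∈ I, ∀ ω ∈ Ω', ∀ h : Bss,
      ‖L ω ε (ιs h) - L ω 0 (ιs h)‖ ≤ C * |ε| * ‖h‖)
    (ε₀ D' lam' : ℝ) (hε₀ : 0 < ε₀) (hD' : 0 < D') (hlam' : 0 < lam')
    (hdec'ss : ∀ ε ∈ I, |ε| ≤ ε₀ → ∀ ω ∈ Ω', ∀ n : ℕ, ∀ h : Bss, ψ (ιw (ιs h)) = 0 →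
      ‖iterOp σ Lss ε n ω h‖ ≤ D' * Real.exp (-lam' * n) * ‖h‖)
    (hdec's : ∀ ε ∈ I, |ε| ≤ ε₀ → ∀ ω ∈ Ω', ∀ n : ℕ, ∀ h : Bs, ψ (ιw h) = 0 →
      ‖iterOp σ L ε n ω h‖ ≤ D' * Real.exp (-lam' * n) * ‖h‖)
    (h3x : ∀ ω ∈ Ω', ∀ n : ℕ, ∀ h : Bw, ψ h = 0 →
      ‖iterOp σ Lw 0 n ω h‖ ≤ D' * Real.exp (-lam' * n) * ‖h‖)
    (Lhat : Ω → (Bss →L[ℝ] Bs)) (Lhatw : Ω → (Bs →L[ℝ] Bw))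
    (hLhat_compat : ∀ ω ∈ Ω', ∀ h : Bss, Lhatw ω (ιs h) = ιw (Lhat ω h))
    (hqx : ∃ K : ℝ, ∀ ω ∈ Ω', ‖Lhat ω‖ ≤ K ∧ ‖Lhatw ω‖ ≤ K)
    (α : ℝ → ℝ) (hα_nonneg : ∀ ε ∈ I, 0 ≤ α ε)
    (hα_lim : Tendsto α (nhdsWithin 0 (I \ {0})) (nhds 0))
    (hlim : ∀ ε ∈ I, ε ≠ 0 → ∀ ω ∈ Ω', ∀ h : Bss,
      ‖(1 / ε) • (ιw (L ω ε (ιs h)) - ιw (L ω 0 (ιs h))) - ιw (Lhat ω h)‖ ≤ α ε * ‖h‖)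
    (hfun : ℝ → Ω → Bss)
    (hfam : ∀ ε ∈ I, |ε| ≤ ε₀ →
      Measurable (hfun ε) ∧ (∃ M : ℝ, ∀ ω ∈ Ω', ‖hfun ε ω‖ ≤ M) ∧
      (∀ ω ∈ Ω', ψ (ιw (ιs (hfun ε ω))) = 1) ∧
      (∀ ω ∈ Ω', Lss ω ε (hfun ε ω) = hfun ε (σ ω)))
    :
    ∀ δ > (0 : ℝ), ∃ η > (0 : ℝ), ∀ ε ∈ I, ε ≠ 0 → |ε| ≤ η → ∀ ω ∈ Ω',
      ‖(1 / ε) • (ιw (ιs (hfun ε ω)) - ιw (ιs (hfun 0 ω))) -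
        ιw (∑' j : ℕ,
          iterOp σ L 0 j (σinv^[j] ω)
            (Lhat (σinv^[j + 1] ω) (hfun 0 (σinv^[j + 1] ω))))‖ ≤ δ := by
  intro δ hδ
  have h0I : (0:ℝ) ∈ I := mem_of_mem_nhds hI
  have h0le : |(0:ℝ)| ≤ ε₀ := by simpa using hε₀.le
  obtain ⟨ω₀, hω₀⟩ : Ω'.Nonempty := by
    rcases Set.eq_empty_or_nonempty Ω' with h | h
    · exfalso; rw [h, measure_empty] at hΩ'full; exact one_ne_zero hΩ'full.symm
    · exact h
  have hτ1 : ∀ ω, ω ∈ Ω' → σinv ω ∈ Ω' := fun ω hω => (hΩ'inv (σinv ω)).mpr (by rwa [hσinv₂ ω])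
  have hτmem : ∀ (n : ℕ) (ω : Ω), ω ∈ Ω' → σinv^[n] ω ∈ Ω' := by
    intro n
    induction n with
    | zero => intro ω hω; exact hω
    | succ n ih =>
      intro ω hω
      rw [Function.iterate_succ_apply']
      exact hτ1 _ (ih ω hω)
  have hστ : ∀ (n : ℕ) (ω : Ω), σ (σinv^[n+1] ω) = σinv^[n] ω := by
    intro n ω; rw [Function.iterate_succ_apply']; exact hσinv₂ _
  set r : ℝ := Real.exp (-lam) with hr_def
  set r' : ℝ := Real.exp (-lam') with hr'_def
  have hr0 : 0 < r := Real.exp_pos _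
  have hr'0 : 0 < r' := Real.exp_pos _
  have hr1 : r < 1 := Real.exp_lt_one_iff.mpr (by linarith)
  have hr'1 : r' < 1 := Real.exp_lt_one_iff.mpr (by linarith)
  have hrn : ∀ n : ℕ, Real.exp (-lam * n) = r ^ n := by
    intro n; rw [hr_def, ← Real.exp_nat_mul, mul_comm]
  have hr'n : ∀ n : ℕ, Real.exp (-lam' * n) = r' ^ n := by
    intro n; rw [hr'_def, ← Real.exp_nat_mul, mul_comm]
  set Sl : ℝ := (1 - r)⁻¹ with hSl_def
  set Sl' : ℝ := (1 - r')⁻¹ with hSl'_def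
  have hSl0 : 0 < Sl := inv_pos.mpr (by linarith)
  have hSl'0 : 0 < Sl' := inv_pos.mpr (by linarith)
  have hgeom : ∀ n : ℕ, ∑ j ∈ Finset.range n, r ^ j ≤ Sl := fun n => geom_bound hr0.le hr1 n
  have hgeom' : ∀ n : ℕ, ∑ j ∈ Finset.range n, r' ^ j ≤ Sl' := fun n => geom_bound hr'0.le hr'1 n
  have hequiv : ∀ ε ∈ I, |ε| ≤ ε₀ → ∀ ω ∈ Ω', Lss ω ε (hfun ε ω) = hfun ε (σ ω) :=
    fun ε hε hle => (hfam ε hε hle).2.2.2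
  have hψ1 : ∀ ε ∈ I, |ε| ≤ ε₀ → ∀ ω ∈ Ω', ψ (ιw (ιs (hfun ε ω))) = 1 :=
    fun ε hε hle => (hfam ε hε hle).2.2.1
  have hequivL : ∀ ε ∈ I, |ε| ≤ ε₀ → ∀ ω ∈ Ω', L ω ε (ιs (hfun ε ω)) = ιs (hfun ε (σ ω)) := by
    intro ε hε hle ω hω
    rw [← hcompat_ss, hequiv ε hε hle ω hω]
  have anchor : ∀ ε ∈ I, |ε| ≤ ε₀ → ∀ ω ∈ Ω', ∀ n : ℕ,
      iterOp σ Lss ε n (σinv^[n] ω) (hfun ε (σinv^[n] ω)) = hfun ε ω := by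
    intro ε hε hle ω hω n
    induction n with
    | zero => rfl
    | succ n ih =>
      rw [iterOp_succ, hequiv ε hε hle _ (hτmem (n+1) ω hω), hστ n ω]
      exact ih
  have anchorS : ∀ ε ∈ I, |ε| ≤ ε₀ → ∀ ω ∈ Ω', ∀ n : ℕ,
      iterOp σ L ε n (σinv^[n] ω) (ιs (hfun ε (σinv^[n] ω))) = ιs (hfun ε ω) := by
    intro ε hε hle ω hω n
    rw [← iterOp_compat σ Lss L ιs hcompat_ss ε n, anchor ε hε hle ω hω n]
  set Ss : ℝ → ℝ := fun e => sSup ((fun ω => ‖ιs (hfun e ω)‖) '' Ω') with hSs_def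
  set St : ℝ → ℝ := fun e => sSup ((fun ω => ‖hfun e ω‖) '' Ω') with hSt_def
  have hSs_ub : ∀ ε ∈ I, |ε| ≤ ε₀ → ∀ ω ∈ Ω', ‖ιs (hfun ε ω)‖ ≤ Ss ε := by
    intro ε hε hle ω hω
    obtain ⟨M, hM⟩ := (hfam ε hε hle).2.1
    exact le_csSup ⟨M, by rintro x ⟨ω', hω', rfl⟩; exact (hιs_norm _).trans (hM ω' hω')⟩ ⟨ω, hω, rfl⟩
  have hSs_le : ∀ (e b : ℝ), (∀ ω ∈ Ω', ‖ιs (hfun e ω)‖ ≤ b) → Ss e ≤ b := by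
    intro e b hb
    exact csSup_le ⟨_, ω₀, hω₀, rfl⟩ (by rintro x ⟨ω', hω', rfl⟩; exact hb ω' hω')
  have hSs_nn : ∀ ε ∈ I, |ε| ≤ ε₀ → 0 ≤ Ss ε :=
    fun ε hε hle => (norm_nonneg _).trans (hSs_ub ε hε hle ω₀ hω₀)
  have hSt_ub : ∀ ε ∈ I, |ε| ≤ ε₀ → ∀ ω ∈ Ω', ‖hfun ε ω‖ ≤ St ε := by
    intro ε hε hle ω hω
    obtain ⟨M, hM⟩ := (hfam ε hε hle).2.1
    exact le_csSup ⟨M, by rintro x ⟨ω', hω', rfl⟩; exact hM ω' hω'⟩ ⟨ω, hω, rfl⟩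
  have hSt_le : ∀ (e b : ℝ), (∀ ω ∈ Ω', ‖hfun e ω‖ ≤ b) → St e ≤ b := by
    intro e b hb
    exact csSup_le ⟨_, ω₀, hω₀, rfl⟩ (by rintro x ⟨ω', hω', rfl⟩; exact hb ω' hω')
  have hSt_nn : ∀ ε ∈ I, |ε| ≤ ε₀ → 0 ≤ St ε :=
    fun ε hε hle => (norm_nonneg _).trans (hSt_ub ε hε hle ω₀ hω₀)
  have hψ0 : ∀ ε ∈ I, |ε| ≤ ε₀ → ∀ ω ∈ Ω', ψ (ιw (ιs (hfun ε ω) - ιs (hfun 0 ω))) = 0 := by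
    intro ε hε hle ω hω
    rw [map_sub, map_sub, hψ1 ε hε hle ω hω, hψ1 0 h0I h0le ω hω]
    ring
  have hψpert : ∀ ε ∈ I, ∀ ω ∈ Ω', ∀ x : Bs, ψ (ιw (L ω ε x - L ω 0 x)) = 0 := by
    intro ε hε ω hω x
    rw [map_sub, map_sub, h4 ε hε ω hω, h4 0 h0I ω hω]
    ring
  have tel : ∀ ε ∈ I, |ε| ≤ ε₀ → ∀ ω ∈ Ω', ∀ n : ℕ,
      ιs (hfun ε ω) - ιs (hfun 0 ω)
        = iterOp σ L 0 n (σinv^[n] ω) (ιs (hfun ε (σinv^[n] ω)) - ιs (hfun 0 (σinv^[n] ω)))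
          + ∑ j ∈ Finset.range n, iterOp σ L 0 j (σinv^[j] ω)
              (L (σinv^[j+1] ω) ε (ιs (hfun ε (σinv^[j+1] ω)))
                - L (σinv^[j+1] ω) 0 (ιs (hfun ε (σinv^[j+1] ω)))) := by
    intro ε hε hle ω hω n
    have step : ∀ m : ℕ,
        iterOp σ L 0 m (σinv^[m] ω) (ιs (hfun ε (σinv^[m] ω)) - ιs (hfun 0 (σinv^[m] ω)))
        = iterOp σ L 0 (m+1) (σinv^[m+1] ω)
            (ιs (hfun ε (σinv^[m+1] ω)) - ιs (hfun 0 (σinv^[m+1] ω)))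
          + iterOp σ L 0 m (σinv^[m] ω)
              (L (σinv^[m+1] ω) ε (ιs (hfun ε (σinv^[m+1] ω)))
                - L (σinv^[m+1] ω) 0 (ιs (hfun ε (σinv^[m+1] ω)))) := by
      intro m
      rw [iterOp_succ, hστ m ω, ← map_add]
      congr 1
      rw [map_sub, hequivL ε hε hle _ (hτmem (m+1) ω hω),
        hequivL 0 h0I h0le _ (hτmem (m+1) ω hω), hστ m ω]
      abel
    have h0' := tele
      (fun m => iterOp σ L 0 m (σinv^[m] ω) (ιs (hfun ε (σinv^[m] ω)) - ιs (hfun 0 (σinv^[m] ω))))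
      (fun j => iterOp σ L 0 j (σinv^[j] ω)
          (L (σinv^[j+1] ω) ε (ιs (hfun ε (σinv^[j+1] ω)))
            - L (σinv^[j+1] ω) 0 (ιs (hfun ε (σinv^[j+1] ω))))) step n
    simpa [iterOp_zero] using h0'
  set K₁ : ℝ := C * D' * Sl' with hK₁def
  have hK₁0 : 0 < K₁ := by positivity
  have star : ∀ ε ∈ I, |ε| ≤ ε₀ → ∀ ω ∈ Ω',
      ‖ιw (ιs (hfun ε ω)) - ιw (ιs (hfun 0 ω))‖ ≤ K₁ * |ε| * Ss ε := by
    intro ε hε hle ω hω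
    refine le_of_forall_pos_le_add ?_
    intro θ hθ
    have hBnd : 0 ≤ D' * (Ss ε + Ss 0) :=
      mul_nonneg hD'.le (by have := hSs_nn ε hε hle; have := hSs_nn 0 h0I h0le; linarith)
    obtain ⟨n, hn⟩ := exists_pow_lt_of_lt_one
      (show (0:ℝ) < θ / (D' * (Ss ε + Ss 0) + 1) by positivity) hr'1
    have hbd : D' * (Ss ε + Ss 0) * r' ^ n ≤ θ := by
      have h5 : (0:ℝ) < D' * (Ss ε + Ss 0) + 1 := by linarith
      have h6 : (D' * (Ss ε + Ss 0) + 1) * r' ^ n ≤ θ := by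
        rw [← le_div_iff₀' h5]
        exact hn.le
      nlinarith [pow_nonneg hr'0.le n]
    have telw := congrArg ιw (tel ε hε hle ω hω n)
    rw [map_sub, map_add, map_sum] at telw
    simp only [iterOp_compat σ L Lw ιw hcompat 0] at telw
    rw [telw]
    have hb1 : ‖iterOp σ Lw 0 n (σinv^[n] ω)
        (ιw (ιs (hfun ε (σinv^[n] ω)) - ιs (hfun 0 (σinv^[n] ω))))‖
        ≤ D' * (Ss ε + Ss 0) * r' ^ n := by
      have := h3x _ (hτmem n ω hω) n _ (hψ0 ε hε hle _ (hτmem n ω hω))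
      rw [hr'n] at this
      refine this.trans ?_
      have e1 : ‖ιw (ιs (hfun ε (σinv^[n] ω)) - ιs (hfun 0 (σinv^[n] ω)))‖ ≤ Ss ε + Ss 0 := by
        refine (hιw_norm _).trans ((norm_sub_le _ _).trans ?_)
        have := hSs_ub ε hε hle _ (hτmem n ω hω)
        have := hSs_ub 0 h0I h0le _ (hτmem n ω hω)
        linarith
      nlinarith [pow_nonneg hr'0.le n, mul_nonneg hD'.le (pow_nonneg hr'0.le n)]
    have hb2 : ‖∑ j ∈ Finset.range n, iterOp σ Lw 0 j (σinv^[j] ω)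
        (ιw (L (σinv^[j+1] ω) ε (ιs (hfun ε (σinv^[j+1] ω)))
          - L (σinv^[j+1] ω) 0 (ιs (hfun ε (σinv^[j+1] ω)))))‖
        ≤ K₁ * |ε| * Ss ε := by
      refine (norm_sum_le _ _).trans ?_
      have hterm : ∀ j ∈ Finset.range n,
          ‖iterOp σ Lw 0 j (σinv^[j] ω)
            (ιw (L (σinv^[j+1] ω) ε (ιs (hfun ε (σinv^[j+1] ω)))
              - L (σinv^[j+1] ω) 0 (ιs (hfun ε (σinv^[j+1] ω)))))‖
          ≤ (D' * (C * |ε| * Ss ε)) * r' ^ j := by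
        intro j _
        have hψj := hψpert ε hε _ (hτmem (j+1) ω hω)
          (ιs (hfun ε (σinv^[j+1] ω)))
        have hh := h3x _ (hτmem j ω hω) j _ hψj
        rw [hr'n] at hh
        refine hh.trans ?_
        have hp : ‖ιw (L (σinv^[j+1] ω) ε (ιs (hfun ε (σinv^[j+1] ω)))
            - L (σinv^[j+1] ω) 0 (ιs (hfun ε (σinv^[j+1] ω))))‖
            ≤ C * |ε| * Ss ε := by
          rw [map_sub]
          refine (h2 ε hε _ (hτmem (j+1) ω hω) _).trans ?_
          exact mul_le_mul_of_nonneg_left (hSs_ub ε hε hle _ (hτmem (j+1) ω hω))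
            (by positivity)
        calc D' * r' ^ j * ‖ιw (L (σinv^[j+1] ω) ε (ιs (hfun ε (σinv^[j+1] ω)))
              - L (σinv^[j+1] ω) 0 (ιs (hfun ε (σinv^[j+1] ω))))‖
            ≤ D' * r' ^ j * (C * |ε| * Ss ε) := by
              have := mul_nonneg hD'.le (pow_nonneg hr'0.le j)
              nlinarith
          _ = (D' * (C * |ε| * Ss ε)) * r' ^ j := by ring
      refine (Finset.sum_le_sum hterm).trans ?_
      rw [← Finset.mul_sum]
      have hcc : 0 ≤ D' * (C * |ε| * Ss ε) := by
        have := hSs_nn ε hε hle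
        positivity
      calc (D' * (C * |ε| * Ss ε)) * ∑ j ∈ Finset.range n, r' ^ j
          ≤ (D' * (C * |ε| * Ss ε)) * Sl' := by
            exact mul_le_mul_of_nonneg_left (hgeom' n) hcc
        _ = K₁ * |ε| * Ss ε := by rw [hK₁def]; ring
    calc ‖iterOp σ Lw 0 n (σinv^[n] ω)
          (ιw (ιs (hfun ε (σinv^[n] ω)) - ιs (hfun 0 (σinv^[n] ω))))
        + ∑ j ∈ Finset.range n, iterOp σ Lw 0 j (σinv^[j] ω)
            (ιw (L (σinv^[j+1] ω) ε (ιs (hfun ε (σinv^[j+1] ω)))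
              - L (σinv^[j+1] ω) 0 (ιs (hfun ε (σinv^[j+1] ω)))))‖
        ≤ D' * (Ss ε + Ss 0) * r' ^ n + K₁ * |ε| * Ss ε := by
          exact (norm_add_le _ _).trans (add_le_add hb1 hb2)
      _ ≤ K₁ * |ε| * Ss ε + θ := by linarith
  obtain ⟨N₁, hN₁⟩ : ∃ N : ℕ, C * lam1 ^ N ≤ 1/4 := by
    obtain ⟨N, hN⟩ := exists_pow_lt_of_lt_one
      (show (0:ℝ) < 1/(4*C) by positivity) hlam1.2
    refine ⟨N, le_of_lt ?_⟩
    calc C * lam1 ^ N < C * (1/(4*C)) := by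
          exact mul_lt_mul_of_pos_left hN hC
      _ = 1/4 := by rw [mul_one_div, div_eq_div_iff (by positivity) (by norm_num : (4:ℝ) ≠ 0)]; ring
  set η₁ : ℝ := min ε₀ (4*C*K₁+1)⁻¹ with hη₁def
  have hη₁pos : 0 < η₁ := lt_min hε₀ (by positivity)
  have hη₁ε₀ : η₁ ≤ ε₀ := min_le_left _ _
  have hCK₁ : ∀ ε : ℝ, |ε| ≤ η₁ → C * K₁ * |ε| ≤ 1/4 := by
    intro ε hle
    have h5 : |ε| ≤ (4*C*K₁+1)⁻¹ := le_trans hle (min_le_right _ _)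
    have hx : (0:ℝ) < 4*C*K₁+1 := by positivity
    have h6 : C * K₁ * |ε| ≤ C * K₁ * (4*C*K₁+1)⁻¹ :=
      mul_le_mul_of_nonneg_left h5 (by positivity)
    refine h6.trans ?_
    rw [mul_inv_le_iff₀ hx]
    nlinarith [mul_pos hC hK₁0]
  have hMs : ∀ ε ∈ I, |ε| ≤ η₁ → Ss ε ≤ 2 * C * Ss 0 := by
    intro ε hε hle
    have hle' : |ε| ≤ ε₀ := le_trans hle hη₁ε₀
    have hpt : ∀ ω ∈ Ω',
        ‖ιs (hfun ε ω)‖ ≤ C * lam1 ^ N₁*Ss ε + (C * Ss 0 + C * (K₁ * |ε| *Ss ε)) := by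
      intro ω hω
      have hid := anchorS ε hε hle' ω hω N₁
      have hb := h1 ε hε _ (hτmem N₁ ω hω) N₁ (ιs (hfun ε (σinv^[N₁] ω)))
      rw [hid] at hb
      refine hb.trans ?_
      have e1 : ‖ιs (hfun ε (σinv^[N₁] ω))‖ ≤ Ss ε := hSs_ub ε hε hle' _ (hτmem N₁ ω hω)
      have e2 : ‖ιw (ιs (hfun ε (σinv^[N₁] ω)))‖ ≤ Ss 0 + K₁ * |ε| *Ss ε := by
        have e3 := star ε hε hle' _ (hτmem N₁ ω hω)
        have e4 : ‖ιw (ιs (hfun 0 (σinv^[N₁] ω)))‖ ≤ Ss 0 :=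
          (hιw_norm _).trans (hSs_ub 0 h0I h0le _ (hτmem N₁ ω hω))
        calc ‖ιw (ιs (hfun ε (σinv^[N₁] ω)))‖
            ≤ ‖ιw (ιs (hfun 0 (σinv^[N₁] ω)))‖
              + ‖ιw (ιs (hfun ε (σinv^[N₁] ω))) - ιw (ιs (hfun 0 (σinv^[N₁] ω)))‖ := by
              exact norm_le_insert' _ _
          _ ≤ Ss 0 + K₁ * |ε| *Ss ε := add_le_add e4 e3
      have e5 : C * lam1 ^ N₁*‖ιs (hfun ε (σinv^[N₁] ω))‖ ≤ C * lam1 ^ N₁*Ss ε :=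
        mul_le_mul_of_nonneg_left e1 (mul_nonneg hC.le (pow_nonneg hlam1.1.le N₁))
      have e6 : C * ‖ιw (ιs (hfun ε (σinv^[N₁] ω)))‖ ≤ C * (Ss 0 + K₁ * |ε| *Ss ε) :=
        mul_le_mul_of_nonneg_left e2 hC.le
      have e7 : C * (Ss 0 + K₁ * |ε| *Ss ε) = C * Ss 0 + C * (K₁ * |ε| *Ss ε) := by ring
      linarith
    have hS := hSs_le ε _ hpt
    have q1 : C * lam1 ^ N₁*Ss ε ≤ (1/4)*Ss ε :=
      mul_le_mul_of_nonneg_right hN₁ (hSs_nn ε hε hle')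
    have q2 : C * (K₁ * |ε| *Ss ε) ≤ (1/4)*Ss ε := by
      have h7 := hCK₁ ε hle
      have h8 : C * (K₁ * |ε| *Ss ε) = (C*K₁ * |ε|)*Ss ε := by ring
      rw [h8]
      exact mul_le_mul_of_nonneg_right h7 (hSs_nn ε hε hle')
    linarith
  set Ms : ℝ := 2 * C * Ss 0 with hMsdef
  have hMs0 : 0 ≤ Ms := by
    have := hSs_nn 0 h0I h0le
    positivity
  have hs_pt : ∀ ε ∈ I, |ε| ≤ η₁ → ∀ ω ∈ Ω', ‖ιs (hfun ε ω)‖ ≤ Ms := by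
    intro ε hε hle ω hω
    exact (hSs_ub ε hε (le_trans hle hη₁ε₀) ω hω).trans (hMs ε hε hle)
  have hwdiff : ∀ ε ∈ I, |ε| ≤ η₁ → ∀ ω ∈ Ω',
      ‖ιw (ιs (hfun ε ω)) - ιw (ιs (hfun 0 ω))‖ ≤ K₁ * Ms * |ε| := by
    intro ε hε hle ω hω
    refine (star ε hε (le_trans hle hη₁ε₀) ω hω).trans ?_
    have h5 : K₁ * |ε| * Ss ε ≤ K₁ * |ε| * Ms :=
      mul_le_mul_of_nonneg_left (hMs ε hε hle) (by positivity)
    calc K₁ * |ε| * Ss ε ≤ K₁ * |ε| * Ms := h5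
      _ = K₁ * Ms * |ε| := by ring
  have hMss : ∀ ε ∈ I, |ε| ≤ η₁ → St ε ≤ 2 * C * Ms := by
    intro ε hε hle
    have hle' : |ε| ≤ ε₀ := le_trans hle hη₁ε₀
    have hpt : ∀ ω ∈ Ω', ‖hfun ε ω‖ ≤ C * lam1 ^ N₁*St ε + C * Ms := by
      intro ω hω
      have hid := anchor ε hε hle' ω hω N₁
      have hb := h1x ε hε _ (hτmem N₁ ω hω) N₁ (hfun ε (σinv^[N₁] ω))
      rw [hid] at hb
      refine hb.trans ?_
      have e1 : C * lam1 ^ N₁*‖hfun ε (σinv^[N₁] ω)‖ ≤ C * lam1 ^ N₁*St ε :=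
        mul_le_mul_of_nonneg_left (hSt_ub ε hε hle' _ (hτmem N₁ ω hω))
          (mul_nonneg hC.le (pow_nonneg hlam1.1.le N₁))
      have e2 : C * ‖ιs (hfun ε (σinv^[N₁] ω))‖ ≤ C * Ms :=
        mul_le_mul_of_nonneg_left (hs_pt ε hε hle _ (hτmem N₁ ω hω)) hC.le
      linarith
    have hS := hSt_le ε _ hpt
    have q1 : C * lam1 ^ N₁*St ε ≤ (1/4)*St ε :=
      mul_le_mul_of_nonneg_right hN₁ (hSt_nn ε hε hle')
    have hCMs : 0 ≤ C * Ms := by positivity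
    linarith
  set Mss : ℝ := 2 * C * Ms with hMssdef
  have hMss0 : 0 ≤ Mss := by positivity
  have hss_pt : ∀ ε ∈ I, |ε| ≤ η₁ → ∀ ω ∈ Ω', ‖hfun ε ω‖ ≤ Mss := by
    intro ε hε hle ω hω
    exact (hSt_ub ε hε (le_trans hle hη₁ε₀) ω hω).trans (hMss ε hε hle)
  set K₃ : ℝ := D * C * Mss * Sl with hK₃def
  have hK₃0 : 0 ≤ K₃ := by positivity
  have hsdiff : ∀ ε ∈ I, |ε| ≤ η₁ → ∀ ω ∈ Ω',
      ‖ιs (hfun ε ω) - ιs (hfun 0 ω)‖ ≤ K₃ * |ε| := by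
    intro ε hε hle ω hω
    have hle' : |ε| ≤ ε₀ := le_trans hle hη₁ε₀
    refine le_of_forall_pos_le_add ?_
    intro θ hθ
    obtain ⟨n, hn⟩ := exists_pow_lt_of_lt_one
      (show (0:ℝ) < θ / (D * (Ms + Ms) + 1) by positivity) hr1
    have hbd : D * (Ms + Ms) * r ^ n ≤ θ := by
      have h5 : (0:ℝ) < D * (Ms + Ms) + 1 := by positivity
      have h6 : (D * (Ms + Ms) + 1) * r ^ n ≤ θ := by
        rw [← le_div_iff₀' h5]
        exact hn.le
      nlinarith [pow_nonneg hr0.le n, hMs0, hD.le]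
    rw [tel ε hε hle' ω hω n]
    have hb1 : ‖iterOp σ L 0 n (σinv^[n] ω)
        (ιs (hfun ε (σinv^[n] ω)) - ιs (hfun 0 (σinv^[n] ω)))‖ ≤ D * (Ms + Ms) * r ^ n := by
      have hh := hdec _ (hτmem n ω hω) n _ (hψ0 ε hε hle' _ (hτmem n ω hω))
      rw [hrn] at hh
      refine hh.trans ?_
      have e1 : ‖ιs (hfun ε (σinv^[n] ω)) - ιs (hfun 0 (σinv^[n] ω))‖ ≤ Ms + Ms := by
        refine (norm_sub_le _ _).trans ?_
        have := hs_pt ε hε hle _ (hτmem n ω hω)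
        have := hs_pt 0 h0I (by simpa using hη₁pos.le) _ (hτmem n ω hω)
        linarith
      calc D * r ^ n * ‖ιs (hfun ε (σinv^[n] ω)) - ιs (hfun 0 (σinv^[n] ω))‖
          ≤ D * r ^ n * (Ms + Ms) :=
            mul_le_mul_of_nonneg_left e1 (mul_nonneg hD.le (pow_nonneg hr0.le n))
        _ = D * (Ms + Ms) * r ^ n := by ring
    have hb2 : ‖∑ j ∈ Finset.range n, iterOp σ L 0 j (σinv^[j] ω)
        (L (σinv^[j+1] ω) ε (ιs (hfun ε (σinv^[j+1] ω)))
          - L (σinv^[j+1] ω) 0 (ιs (hfun ε (σinv^[j+1] ω))))‖ ≤ K₃ * |ε| := by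
      refine (norm_sum_le _ _).trans ?_
      have hterm : ∀ j ∈ Finset.range n,
          ‖iterOp σ L 0 j (σinv^[j] ω)
            (L (σinv^[j+1] ω) ε (ιs (hfun ε (σinv^[j+1] ω)))
              - L (σinv^[j+1] ω) 0 (ιs (hfun ε (σinv^[j+1] ω))))‖
          ≤ (D * (C * Mss * |ε|)) * r ^ j := by
        intro j _
        have hψj := hψpert ε hε _ (hτmem (j+1) ω hω) (ιs (hfun ε (σinv^[j+1] ω)))
        have hh := hdec _ (hτmem j ω hω) j _ hψj
        rw [hrn] at hh
        refine hh.trans ?_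
        have hp : ‖L (σinv^[j+1] ω) ε (ιs (hfun ε (σinv^[j+1] ω)))
            - L (σinv^[j+1] ω) 0 (ιs (hfun ε (σinv^[j+1] ω)))‖ ≤ C * Mss * |ε| := by
          refine (h2x ε hε _ (hτmem (j+1) ω hω) _).trans ?_
          calc C * |ε| * ‖hfun ε (σinv^[j+1] ω)‖ ≤ C * |ε| * Mss :=
                mul_le_mul_of_nonneg_left (hss_pt ε hε hle _ (hτmem (j+1) ω hω))
                  (by positivity)
            _ = C * Mss * |ε| := by ring
        calc D * r ^ j * ‖L (σinv^[j+1] ω) ε (ιs (hfun ε (σinv^[j+1] ω)))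
              - L (σinv^[j+1] ω) 0 (ιs (hfun ε (σinv^[j+1] ω)))‖
            ≤ D * r ^ j * (C * Mss * |ε|) :=
              mul_le_mul_of_nonneg_left hp (by positivity)
          _ = (D * (C * Mss * |ε|)) * r ^ j := by ring
      refine (Finset.sum_le_sum hterm).trans ?_
      rw [← Finset.mul_sum]
      calc (D * (C * Mss * |ε|)) * ∑ j ∈ Finset.range n, r ^ j
          ≤ (D * (C * Mss * |ε|)) * Sl :=
            mul_le_mul_of_nonneg_left (hgeom n) (by positivity)
        _ = K₃ * |ε| := by rw [hK₃def]; ring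
    calc ‖iterOp σ L 0 n (σinv^[n] ω)
          (ιs (hfun ε (σinv^[n] ω)) - ιs (hfun 0 (σinv^[n] ω)))
        + ∑ j ∈ Finset.range n, iterOp σ L 0 j (σinv^[j] ω)
            (L (σinv^[j+1] ω) ε (ιs (hfun ε (σinv^[j+1] ω)))
              - L (σinv^[j+1] ω) 0 (ιs (hfun ε (σinv^[j+1] ω))))‖
        ≤ D * (Ms + Ms) * r ^ n + K₃ * |ε| :=
          (norm_add_le _ _).trans (add_le_add hb1 hb2)
      _ ≤ K₃ * |ε| + θ := by linarith
  have hNeBot : (nhdsWithin (0:ℝ) (I \ {0})).NeBot := by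
    rw [Set.diff_eq, nhdsWithin_inter_of_mem (mem_nhdsWithin_of_mem_nhds hI)]
    exact Filter.NeBot.mono (by infer_instance) le_rfl
  have halpha_small : ∀ c : ℝ, 0 < c → ∃ η : ℝ, 0 < η ∧
      ∀ ε ∈ I, ε ≠ 0 → |ε| ≤ η → α ε < c := by
    intro c hc
    have hmem : α ⁻¹' Set.Iio c ∈ nhdsWithin (0:ℝ) (I \ {0}) :=
      hα_lim (Iio_mem_nhds hc)
    rw [Metric.mem_nhdsWithin_iff] at hmem
    obtain ⟨η', hη', hsub⟩ := hmem
    refine ⟨η'/2, by linarith, ?_⟩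
    intro ε hεI hε0 hle
    have : ε ∈ Metric.ball (0:ℝ) η' ∩ (I \ {0}) := by
      constructor
      · rw [Metric.mem_ball, Real.dist_eq, sub_zero]
        linarith [abs_nonneg ε]
      · exact ⟨hεI, by simpa using hε0⟩
    exact hsub this
  have hψLhat : ∀ ω ∈ Ω', ∀ h : Bss, ψ (ιw (Lhat ω h)) = 0 := by
    intro ω hω h
    have key : ∀ ε ∈ I, ε ≠ 0 → |ψ (ιw (Lhat ω h))| ≤ (‖ψ‖ * ‖h‖) * α ε := by
      intro ε hεI hε0
      have h5 := hlim ε hεI hε0 ω hω h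
      have hψu : ψ ((1 / ε) • (ιw (L ω ε (ιs h)) - ιw (L ω 0 (ιs h)))) = 0 := by
        rw [_root_.map_smul, map_sub, h4 ε hεI ω hω, h4 0 h0I ω hω]
        simp
      have heq : |ψ (ιw (Lhat ω h))|
          = |ψ ((1 / ε) • (ιw (L ω ε (ιs h)) - ιw (L ω 0 (ιs h))) - ιw (Lhat ω h))| := by
        rw [map_sub, hψu, zero_sub, abs_neg]
      rw [heq]
      calc |ψ ((1 / ε) • (ιw (L ω ε (ιs h)) - ιw (L ω 0 (ιs h))) - ιw (Lhat ω h))|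
          ≤ ‖ψ‖ * ‖(1 / ε) • (ιw (L ω ε (ιs h)) - ιw (L ω 0 (ιs h))) - ιw (Lhat ω h)‖ := by
            exact ψ.le_opNorm _
        _ ≤ ‖ψ‖ * (α ε * ‖h‖) := mul_le_mul_of_nonneg_left h5 (norm_nonneg ψ)
        _ = (‖ψ‖ * ‖h‖) * α ε := by ring
    have hT : Tendsto (fun ε => (‖ψ‖ * ‖h‖) * α ε) (nhdsWithin (0:ℝ) (I \ {0})) (nhds 0) := by
      have := hα_lim.const_mul (‖ψ‖ * ‖h‖)
      simpa using this
    have hle0 : |ψ (ιw (Lhat ω h))| ≤ 0 := by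
      refine ge_of_tendsto hT ?_
      filter_upwards [self_mem_nhdsWithin] with ε hε
      exact key ε hε.1 (by simpa using hε.2)
    have := abs_nonneg (ψ (ιw (Lhat ω h)))
    exact abs_eq_zero.mp (le_antisymm hle0 this)
  obtain ⟨K, hK⟩ := hqx
  have hK0 : 0 ≤ K := le_trans (norm_nonneg _) (hK ω₀ hω₀).1
  set B₁ : ℝ := D' * (K₁ * Ms) with hB₁def
  set B₂ : ℝ := D * (K * Mss) * Sl with hB₂def
  have hB₁0 : 0 ≤ B₁ := mul_nonneg hD'.le (mul_nonneg hK₁0.le hMs0)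
  have hB₂0 : 0 ≤ B₂ :=
    mul_nonneg (mul_nonneg hD.le (mul_nonneg hK0 hMss0)) hSl0.le
  obtain ⟨n₁, hn₁⟩ := exists_pow_lt_of_lt_one
    (show (0:ℝ) < (δ/4)/(B₁+1) by positivity) hr'1
  obtain ⟨n₂, hn₂⟩ := exists_pow_lt_of_lt_one
    (show (0:ℝ) < (δ/4)/(B₂+1) by positivity) hr1
  set n : ℕ := max n₁ n₂ with hndef
  have hB₁n : B₁ * r' ^ n ≤ δ/4 := by
    have hmon : r' ^ n ≤ r' ^ n₁ :=
      pow_le_pow_of_le_one hr'0.le hr'1.le (le_max_left _ _)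
    have hne : B₁ + 1 ≠ 0 := by positivity
    have hdpos : 0 < (δ/4)/(B₁+1) := by positivity
    calc B₁ * r' ^ n ≤ B₁ * r' ^ n₁ := mul_le_mul_of_nonneg_left hmon hB₁0
      _ ≤ B₁ * ((δ/4)/(B₁+1)) := mul_le_mul_of_nonneg_left hn₁.le hB₁0
      _ ≤ (B₁+1) * ((δ/4)/(B₁+1)) := mul_le_mul_of_nonneg_right (by linarith) hdpos.le
      _ = δ/4 := by rw [mul_comm, div_mul_cancel₀ _ hne]
  have hB₂n : B₂ * r ^ n ≤ δ/4 := by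
    have hmon : r ^ n ≤ r ^ n₂ :=
      pow_le_pow_of_le_one hr0.le hr1.le (le_max_right _ _)
    have hne : B₂ + 1 ≠ 0 := by positivity
    have hdpos : 0 < (δ/4)/(B₂+1) := by positivity
    calc B₂ * r ^ n ≤ B₂ * r ^ n₂ := mul_le_mul_of_nonneg_left hmon hB₂0
      _ ≤ B₂ * ((δ/4)/(B₂+1)) := mul_le_mul_of_nonneg_left hn₂.le hB₂0
      _ ≤ (B₂+1) * ((δ/4)/(B₂+1)) := mul_le_mul_of_nonneg_right (by linarith) hdpos.le
      _ = δ/4 := by rw [mul_comm, div_mul_cancel₀ _ hne]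
  have hX2 : 0 ≤ D' * Sl' * Mss := mul_nonneg (mul_nonneg hD'.le hSl'0.le) hMss0
  have hX3 : 0 ≤ D' * Sl' * (K * K₃) :=
    mul_nonneg (mul_nonneg hD'.le hSl'0.le) (mul_nonneg hK0 hK₃0)
  set c₂ : ℝ := (δ/4)/(D' * Sl' * Mss + 1) with hc₂def
  have hc₂pos : 0 < c₂ := by
    apply div_pos (by linarith)
    linarith
  obtain ⟨η₂, hη₂pos, hη₂⟩ := halpha_small c₂ hc₂pos
  set η₃ : ℝ := (δ/4)/(D' * Sl' * (K * K₃) + 1) with hη₃def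
  have hη₃pos : 0 < η₃ := by
    apply div_pos (by linarith)
    linarith
  refine ⟨min η₁ (min η₂ η₃), lt_min hη₁pos (lt_min hη₂pos hη₃pos), ?_⟩
  intro ε hεI hε0 hεle ω hω
  have hle₁ : |ε| ≤ η₁ := le_trans hεle (min_le_left _ _)
  have hle₂ : |ε| ≤ η₂ := le_trans hεle ((min_le_right _ _).trans (min_le_left _ _))
  have hle₃ : |ε| ≤ η₃ := le_trans hεle ((min_le_right _ _).trans (min_le_right _ _))
  have hle₀ : |ε| ≤ ε₀ := le_trans hle₁ hη₁ε₀
  have h0η₁ : |(0:ℝ)| ≤ η₁ := by simpa using hη₁pos.le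
  set t : ℕ → Bs := fun j => iterOp σ L 0 j (σinv^[j] ω)
    (Lhat (σinv^[j + 1] ω) (hfun 0 (σinv^[j + 1] ω))) with ht_def
  have htb : ∀ j : ℕ, ‖t j‖ ≤ (D * (K * Mss)) * r ^ j := by
    intro j
    have hψc := hψLhat _ (hτmem (j+1) ω hω) (hfun 0 (σinv^[j+1] ω))
    have hh := hdec _ (hτmem j ω hω) j _ hψc
    rw [hrn] at hh
    refine hh.trans ?_
    have hcore : ‖Lhat (σinv^[j+1] ω) (hfun 0 (σinv^[j+1] ω))‖ ≤ K * Mss := by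
      refine ((Lhat _).le_opNorm _).trans ?_
      exact mul_le_mul (hK _ (hτmem (j+1) ω hω)).1
        (hss_pt 0 h0I h0η₁ _ (hτmem (j+1) ω hω)) (norm_nonneg _) hK0
    calc D * r ^ j * ‖Lhat (σinv^[j+1] ω) (hfun 0 (σinv^[j+1] ω))‖
        ≤ D * r ^ j * (K * Mss) :=
          mul_le_mul_of_nonneg_left hcore (mul_nonneg hD.le (pow_nonneg hr0.le j))
      _ = (D * (K * Mss)) * r ^ j := by ring
  have hsum : Summable t :=
    Summable.of_norm_bounded
      ((summable_geometric_of_lt_one hr0.le hr1).mul_left (D * (K * Mss))) htb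
  have hsum2 : Summable (fun i : ℕ => (D * (K * Mss)) * r ^ (i + n)) := by
    refine ((summable_geometric_of_lt_one hr0.le hr1).mul_left
      ((D * (K * Mss)) * r ^ n)).congr fun i => ?_
    rw [pow_add]; ring
  have hsumn : Summable (fun i : ℕ => ‖t (i + n)‖) :=
    Summable.of_nonneg_of_le (fun i => norm_nonneg _) (fun i => htb (i + n)) hsum2
  have htailb : ‖ιw (∑' i : ℕ, t (i + n))‖ ≤ B₂ * r ^ n := by
    calc ‖ιw (∑' i : ℕ, t (i + n))‖ ≤ ‖∑' i : ℕ, t (i + n)‖ := hιw_norm _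
      _ ≤ ∑' i : ℕ, ‖t (i + n)‖ := norm_tsum_le_tsum_norm hsumn
      _ ≤ ∑' i : ℕ, (D * (K * Mss)) * r ^ (i + n) := Summable.tsum_le_tsum (fun i => htb (i + n)) hsumn hsum2
      _ = (D * (K * Mss)) * r ^ n * ∑' i : ℕ, r ^ i := by
          rw [← tsum_mul_left]
          exact tsum_congr fun i => by rw [pow_add]; ring
      _ = (D * (K * Mss)) * r ^ n * Sl := by rw [tsum_geometric_of_lt_one hr0.le hr1]
      _ = B₂ * r ^ n := by rw [hB₂def]; ring
  have telw := congrArg ιw (tel ε hεI hle₀ ω hω n)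
  rw [map_add, map_sum] at telw
  simp only [iterOp_compat σ L Lw ιw hcompat 0, map_sub] at telw
  have hts : ιw (∑' j : ℕ, t j)
      = ιw (∑ j ∈ Finset.range n, t j) + ιw (∑' i : ℕ, t (i + n)) := by
    rw [← map_add, Summable.sum_add_tsum_nat_add n hsum]
  have key : (1 / ε) • (ιw (ιs (hfun ε ω)) - ιw (ιs (hfun 0 ω))) - ιw (∑' j : ℕ, t j)
      = (1/ε) • iterOp σ Lw 0 n (σinv^[n] ω)
          (ιw (ιs (hfun ε (σinv^[n] ω))) - ιw (ιs (hfun 0 (σinv^[n] ω))))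
        + ∑ j ∈ Finset.range n, iterOp σ Lw 0 j (σinv^[j] ω)
            ((1/ε) • (ιw (L (σinv^[j+1] ω) ε (ιs (hfun ε (σinv^[j+1] ω))))
                - ιw (L (σinv^[j+1] ω) 0 (ιs (hfun ε (σinv^[j+1] ω)))))
              - ιw (Lhat (σinv^[j+1] ω) (hfun 0 (σinv^[j+1] ω))))
        - ιw (∑' i : ℕ, t (i + n)) := by
    rw [telw, hts]
    simp only [ht_def, map_sum, iterOp_compat σ L Lw ιw hcompat 0, map_sub, _root_.map_smul,
      smul_sub, smul_add, Finset.smul_sum, Finset.sum_sub_distrib]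
    abel
  have habs : |1/ε| * |ε| = 1 := by
    rw [one_div, abs_inv]
    exact inv_mul_cancel₀ (abs_ne_zero.mpr hε0)
  have hb1 : ‖(1/ε) • iterOp σ Lw 0 n (σinv^[n] ω)
      (ιw (ιs (hfun ε (σinv^[n] ω))) - ιw (ιs (hfun 0 (σinv^[n] ω))))‖ ≤ B₁ * r' ^ n := by
    rw [norm_smul, Real.norm_eq_abs]
    have hψb : ψ (ιw (ιs (hfun ε (σinv^[n] ω))) - ιw (ιs (hfun 0 (σinv^[n] ω)))) = 0 := by
      rw [map_sub, hψ1 ε hεI hle₀ _ (hτmem n ω hω), hψ1 0 h0I h0le _ (hτmem n ω hω)]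
      ring
    have hx := h3x _ (hτmem n ω hω) n _ hψb
    rw [hr'n] at hx
    have harg : ‖ιw (ιs (hfun ε (σinv^[n] ω))) - ιw (ιs (hfun 0 (σinv^[n] ω)))‖
        ≤ K₁ * Ms * |ε| := hwdiff ε hεI hle₁ _ (hτmem n ω hω)
    calc |1/ε| * ‖iterOp σ Lw 0 n (σinv^[n] ω)
          (ιw (ιs (hfun ε (σinv^[n] ω))) - ιw (ιs (hfun 0 (σinv^[n] ω))))‖
        ≤ |1/ε| * (D' * r' ^ n * (K₁ * Ms * |ε|)) := by
          refine mul_le_mul_of_nonneg_left (hx.trans ?_) (abs_nonneg _)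
          exact mul_le_mul_of_nonneg_left harg
            (mul_nonneg hD'.le (pow_nonneg hr'0.le n))
      _ = D' * (K₁ * Ms) * r' ^ n * (|1/ε| * |ε|) := by ring
      _ = B₁ * r' ^ n := by rw [habs, hB₁def, mul_one]
  have hαnn : 0 ≤ α ε := hα_nonneg ε hεI
  have hQ0 : 0 ≤ α ε * Mss + K * (K₃ * |ε|) := by
    have h9 : 0 ≤ K * (K₃ * |ε|) := mul_nonneg hK0 (mul_nonneg hK₃0 (abs_nonneg ε))
    have h10 : 0 ≤ α ε * Mss := mul_nonneg hαnn hMss0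
    linarith
  have hb2 : ‖∑ j ∈ Finset.range n, iterOp σ Lw 0 j (σinv^[j] ω)
      ((1/ε) • (ιw (L (σinv^[j+1] ω) ε (ιs (hfun ε (σinv^[j+1] ω))))
          - ιw (L (σinv^[j+1] ω) 0 (ιs (hfun ε (σinv^[j+1] ω)))))
        - ιw (Lhat (σinv^[j+1] ω) (hfun 0 (σinv^[j+1] ω))))‖
      ≤ (D' * (α ε * Mss + K * (K₃ * |ε|))) * Sl' := by
    refine (norm_sum_le _ _).trans ?_
    have hterm2 : ∀ j ∈ Finset.range n,
        ‖iterOp σ Lw 0 j (σinv^[j] ω)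
          ((1/ε) • (ιw (L (σinv^[j+1] ω) ε (ιs (hfun ε (σinv^[j+1] ω))))
              - ιw (L (σinv^[j+1] ω) 0 (ιs (hfun ε (σinv^[j+1] ω)))))
            - ιw (Lhat (σinv^[j+1] ω) (hfun 0 (σinv^[j+1] ω))))‖
        ≤ (D' * (α ε * Mss + K * (K₃ * |ε|))) * r' ^ j := by
      intro j _
      have hμ := hτmem (j+1) ω hω
      have hψE : ψ ((1/ε) • (ιw (L (σinv^[j+1] ω) ε (ιs (hfun ε (σinv^[j+1] ω))))
            - ιw (L (σinv^[j+1] ω) 0 (ιs (hfun ε (σinv^[j+1] ω)))))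
          - ιw (Lhat (σinv^[j+1] ω) (hfun 0 (σinv^[j+1] ω)))) = 0 := by
        rw [map_sub, _root_.map_smul, map_sub, h4 ε hεI _ hμ, h4 0 h0I _ hμ,
          hψLhat _ hμ]
        simp
      have hh := h3x _ (hτmem j ω hω) j _ hψE
      rw [hr'n] at hh
      refine hh.trans ?_
      have hEb : ‖(1/ε) • (ιw (L (σinv^[j+1] ω) ε (ιs (hfun ε (σinv^[j+1] ω))))
            - ιw (L (σinv^[j+1] ω) 0 (ιs (hfun ε (σinv^[j+1] ω)))))
          - ιw (Lhat (σinv^[j+1] ω) (hfun 0 (σinv^[j+1] ω)))‖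
          ≤ α ε * Mss + K * (K₃ * |ε|) := by
        have hsplit : (1/ε) • (ιw (L (σinv^[j+1] ω) ε (ιs (hfun ε (σinv^[j+1] ω))))
              - ιw (L (σinv^[j+1] ω) 0 (ιs (hfun ε (σinv^[j+1] ω)))))
            - ιw (Lhat (σinv^[j+1] ω) (hfun 0 (σinv^[j+1] ω)))
            = ((1/ε) • (ιw (L (σinv^[j+1] ω) ε (ιs (hfun ε (σinv^[j+1] ω))))
                - ιw (L (σinv^[j+1] ω) 0 (ιs (hfun ε (σinv^[j+1] ω)))))
              - ιw (Lhat (σinv^[j+1] ω) (hfun ε (σinv^[j+1] ω))))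
            + (ιw (Lhat (σinv^[j+1] ω) (hfun ε (σinv^[j+1] ω)))
              - ιw (Lhat (σinv^[j+1] ω) (hfun 0 (σinv^[j+1] ω)))) := by abel
        rw [hsplit]
        refine (norm_add_le _ _).trans ?_
        have hu : ‖(1/ε) • (ιw (L (σinv^[j+1] ω) ε (ιs (hfun ε (σinv^[j+1] ω))))
              - ιw (L (σinv^[j+1] ω) 0 (ιs (hfun ε (σinv^[j+1] ω)))))
            - ιw (Lhat (σinv^[j+1] ω) (hfun ε (σinv^[j+1] ω)))‖
            ≤ α ε * Mss := by
          refine (hlim ε hεI hε0 _ hμ (hfun ε (σinv^[j+1] ω))).trans ?_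
          exact mul_le_mul_of_nonneg_left (hss_pt ε hεI hle₁ _ hμ) hαnn
        have hv : ‖ιw (Lhat (σinv^[j+1] ω) (hfun ε (σinv^[j+1] ω)))
            - ιw (Lhat (σinv^[j+1] ω) (hfun 0 (σinv^[j+1] ω)))‖
            ≤ K * (K₃ * |ε|) := by
          have hveq : ιw (Lhat (σinv^[j+1] ω) (hfun ε (σinv^[j+1] ω)))
              - ιw (Lhat (σinv^[j+1] ω) (hfun 0 (σinv^[j+1] ω)))
              = Lhatw (σinv^[j+1] ω) (ιs (hfun ε (σinv^[j+1] ω)) - ιs (hfun 0 (σinv^[j+1] ω))) := by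
            rw [map_sub, hLhat_compat _ hμ, hLhat_compat _ hμ]
          rw [hveq]
          refine ((Lhatw _).le_opNorm _).trans ?_
          exact mul_le_mul (hK _ hμ).2 (hsdiff ε hεI hle₁ _ hμ) (norm_nonneg _) hK0
        linarith
      calc D' * r' ^ j * ‖(1/ε) • (ιw (L (σinv^[j+1] ω) ε (ιs (hfun ε (σinv^[j+1] ω))))
            - ιw (L (σinv^[j+1] ω) 0 (ιs (hfun ε (σinv^[j+1] ω)))))
          - ιw (Lhat (σinv^[j+1] ω) (hfun 0 (σinv^[j+1] ω)))‖
          ≤ D' * r' ^ j * (α ε * Mss + K * (K₃ * |ε|)) :=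
            mul_le_mul_of_nonneg_left hEb (mul_nonneg hD'.le (pow_nonneg hr'0.le j))
        _ = (D' * (α ε * Mss + K * (K₃ * |ε|))) * r' ^ j := by ring
    refine (Finset.sum_le_sum hterm2).trans ?_
    rw [← Finset.mul_sum]
    exact mul_le_mul_of_nonneg_left (hgeom' n) (mul_nonneg hD'.le hQ0)
  have hq1 : D' * Sl' * Mss * α ε ≤ δ/4 := by
    have hαc : α ε ≤ c₂ := (hη₂ ε hεI hε0 hle₂).le
    have hne : D' * Sl' * Mss + 1 ≠ 0 := ne_of_gt (by linarith)
    calc D' * Sl' * Mss * α ε ≤ (D' * Sl' * Mss) * c₂ :=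
          mul_le_mul_of_nonneg_left hαc hX2
      _ ≤ (D' * Sl' * Mss + 1) * c₂ :=
          mul_le_mul_of_nonneg_right (by linarith) hc₂pos.le
      _ = δ/4 := by rw [hc₂def, mul_comm, div_mul_cancel₀ _ hne]
  have hq2 : D' * Sl' * (K * K₃) * |ε| ≤ δ/4 := by
    have hne : D' * Sl' * (K * K₃) + 1 ≠ 0 := ne_of_gt (by linarith)
    calc D' * Sl' * (K * K₃) * |ε| ≤ (D' * Sl' * (K * K₃)) * η₃ :=
          mul_le_mul_of_nonneg_left hle₃ hX3
      _ ≤ (D' * Sl' * (K * K₃) + 1) * η₃ :=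
          mul_le_mul_of_nonneg_right (by linarith) hη₃pos.le
      _ = δ/4 := by rw [hη₃def, mul_comm, div_mul_cancel₀ _ hne]
  have hring : (D' * (α ε * Mss + K * (K₃ * |ε|))) * Sl'
      = D' * Sl' * Mss * α ε + D' * Sl' * (K * K₃) * |ε| := by ring
  rw [key]
  set A : Bw := (1/ε) • iterOp σ Lw 0 n (σinv^[n] ω)
      (ιw (ιs (hfun ε (σinv^[n] ω))) - ιw (ιs (hfun 0 (σinv^[n] ω)))) with hAdef
  set S : Bw := ∑ j ∈ Finset.range n, iterOp σ Lw 0 j (σinv^[j] ω)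
      ((1/ε) • (ιw (L (σinv^[j+1] ω) ε (ιs (hfun ε (σinv^[j+1] ω))))
          - ιw (L (σinv^[j+1] ω) 0 (ιs (hfun ε (σinv^[j+1] ω)))))
        - ιw (Lhat (σinv^[j+1] ω) (hfun 0 (σinv^[j+1] ω)))) with hSdef
  set T : Bw := ιw (∑' i : ℕ, t (i + n)) with hTdef
  calc ‖A + S - T‖ ≤ ‖A + S‖ + ‖T‖ := norm_sub_le _ _
    _ ≤ ‖A‖ + ‖S‖ + ‖T‖ := by linarith [norm_add_le A S]
    _ ≤ δ := by linarith [hb1, hb2, htailb, hB₁n, hB₂n, hq1, hq2, hring]
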